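/- Let 𝔽 be a field of characteristic zero, let α, β ∈ 𝔽 with α ≠ β, and let k ≥ 1. Define the Bernstein polynomials φ_i(λ) := C(k,i)·(λ−α)^i·(β−λ)^{k−i} for i = 0,…,k (where C(k,i) is the binomial coefficient), and let π(λ) := (φ_k(λ), …, φ_0(λ))ᵀ. Define the k×(k+1) matrix pencil L(λ) with entries C(k, k−r)·(λ−β) in position (r,r) and C(k, k−r+1)·(λ−α) in position (r,r+1), and zeros elsewhere. Then L(λ)·π(λ) = 0 identically, L(λ₀) has rank k for every λ₀ ∈ 𝔽, and the k×(k+1) matrix formed by the coefficients of λ in the entries of L(λ) has rank k (so L(λ) is a dual minimal basis for the Bernstein basis of degree k on [α, β]). -/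

import Mathlib

open Polynomial Matrix

namespace PaperLin

variable {F : Type*} [Field F]

private lemma rank_eq_of_submatrix {k : ℕ} (M : Matrix (Fin k) (Fin (k+1)) F)
    (f : Fin k → Fin (k+1)) (h : IsUnit (M.submatrix id f).det) : M.rank = k := by
  refine le_antisymm (M.rank_le_card_height.trans (by simp)) ?_
  let P : Matrix (Fin (k+1)) (Fin k) F := Matrix.of fun c j => if c = f j then 1 else 0
  have hMP : M * P = M.submatrix id f := by
    ext r j
    simp [Matrix.mul_apply, P, Matrix.submatrix_apply]
  have h1 : (M * P).rank = k := by
    rw [hMP, Matrix.rank_of_isUnit _ ((Matrix.isUnit_iff_isUnit_det _).2 h)]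
    simp
  calc (k:ℕ) = (M*P).rank := h1.symm
    _ ≤ M.rank := Matrix.rank_mul_le_left M P

private lemma coeff_one_aux {F : Type*} [Field F] (n : ℕ) (b : F) :
    ((n : Polynomial F) * (Polynomial.X - Polynomial.C b)).coeff 1 = (n : F) := by
  have : (n : Polynomial F) = Polynomial.C (n : F) := by simp
  rw [this, mul_sub]
  simp [coeff_sub, coeff_C_mul, coeff_C]

/-- The explicit bidiagonal pencil is a dual minimal basis for the Bernstein
basis of degree `k` on `[α, β]`. -/
theorem statement7 [CharZero F] (α β : F) (hαβ : α ≠ β) (k : ℕ) (hk : 1 ≤ k) :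
    let φ : Fin (k + 1) → Polynomial F := fun i =>
      (k.choose (i : ℕ) : Polynomial F) *
        ((Polynomial.X - Polynomial.C α) ^ (i : ℕ) *
          (Polynomial.C β - Polynomial.X) ^ (k - (i : ℕ)))
    let π : Fin (k + 1) → Polynomial F := fun i => φ i.rev
    let L : Matrix (Fin k) (Fin (k + 1)) (Polynomial F) :=
      Matrix.of fun r c =>
        if c = r.castSucc then
          (k.choose (k - 1 - (r : ℕ)) : Polynomial F) * (Polynomial.X - Polynomial.C β)
        else if c = r.succ then
          (k.choose (k - (r : ℕ)) : Polynomial F) * (Polynomial.X - Polynomial.C α)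
        else 0
    L.mulVec π = 0 ∧
    (∀ x : F, (L.map (Polynomial.eval x)).rank = k) ∧
    (Matrix.of fun (r : Fin k) (c : Fin (k + 1)) => (L r c).coeff 1).rank = k := by
  intro φ π L
  have hrev : ∀ i : Fin (k+1), (i.rev : ℕ) = k - i := by
    intro i; simp [Fin.val_rev]
  have hchoose_ne : ∀ m : ℕ, m ≤ k → ((k.choose m : F) ≠ 0) := by
    intro m hm
    exact Nat.cast_ne_zero.2 (Nat.choose_pos hm).ne'
  refine ⟨?_, ?_, ?_⟩
  · -- L.mulVec π = 0
    funext r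
    have hr : (r : ℕ) < k := r.isLt
    have hne : r.castSucc ≠ r.succ := (Fin.castSucc_lt_succ : r.castSucc < r.succ).ne
    have e1 : (r.castSucc : ℕ) = (r : ℕ) := rfl
    have e2 : (r.succ : ℕ) = (r : ℕ) + 1 := rfl
    have hsum : L.mulVec π r =
        L r r.castSucc * π r.castSucc + L r r.succ * π r.succ := by
      obtain ⟨A, hA⟩ : ∃ A, L r r.castSucc * π r.castSucc = A := ⟨_, rfl⟩
      obtain ⟨B, hB⟩ : ∃ B, L r r.succ * π r.succ = B := ⟨_, rfl⟩
      rw [Matrix.mulVec, dotProduct, hA, hB]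
      have : ∀ c : Fin (k+1), L r c * π c =
          (if c = r.castSucc then A else 0) +
          (if c = r.succ then B else 0) := by
        intro c
        by_cases h1 : c = r.castSucc
        · subst h1
          rw [if_pos rfl, if_neg hne, add_zero, hA]
        · by_cases h2 : c = r.succ
          · subst h2
            rw [if_neg h1, if_pos rfl, zero_add, hB]
          · rw [if_neg h1, if_neg h2, add_zero]
            have hz : L r c = 0 := by
              show (if c = r.castSucc then _ else if c = r.succ then _ else (0:Polynomial F)) = 0
              rw [if_neg h1, if_neg h2]
            rw [hz, zero_mul]
      simp_rw [this, Finset.sum_add_distrib, Finset.sum_ite_eq', Finset.mem_univ, if_true]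
    rw [hsum]
    have hLc : L r r.castSucc = (k.choose (k - 1 - (r : ℕ)) : Polynomial F) *
        (Polynomial.X - Polynomial.C β) := by simp [L]
    have hLs : L r r.succ = (k.choose (k - (r : ℕ)) : Polynomial F) *
        (Polynomial.X - Polynomial.C α) := by simp [L, hne.symm]
    have hπc : π r.castSucc = (k.choose (k - (r : ℕ)) : Polynomial F) *
        ((Polynomial.X - Polynomial.C α) ^ (k - (r : ℕ)) *
          (Polynomial.C β - Polynomial.X) ^ (r : ℕ)) := by
      simp only [π, φ, hrev, Fin.coe_castSucc]
      rw [show k - (k - (r : ℕ)) = (r : ℕ) from by omega]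
    have hπs : π r.succ = (k.choose (k - 1 - (r : ℕ)) : Polynomial F) *
        ((Polynomial.X - Polynomial.C α) ^ (k - 1 - (r : ℕ)) *
          (Polynomial.C β - Polynomial.X) ^ ((r : ℕ) + 1)) := by
      simp only [π, φ, hrev, Fin.val_succ]
      rw [show k - ((r : ℕ) + 1) = k - 1 - (r : ℕ) from by omega,
        show k - (k - 1 - (r : ℕ)) = (r : ℕ) + 1 from by omega]
    rw [hLc, hLs, hπc, hπs]
    have hpow : (Polynomial.X - Polynomial.C α) ^ (k - (r : ℕ)) =
        (Polynomial.X - Polynomial.C α) ^ (k - 1 - (r : ℕ)) *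
          (Polynomial.X - Polynomial.C α) := by
      rw [← pow_succ]
      congr 1
      omega
    rw [hpow, pow_succ]
    simp only [Pi.zero_apply]
    ring
  · -- rank of evaluated pencil
    intro x
    by_cases hx : x = β
    · apply rank_eq_of_submatrix _ (Fin.succ)
      rw [Matrix.det_of_lowerTriangular]
      · refine isUnit_iff_ne_zero.mpr (Finset.prod_ne_zero_iff.mpr fun r _ => ?_)
        have : ((L.map (Polynomial.eval x)).submatrix id Fin.succ) r r =
            (k.choose (k - (r : ℕ)) : F) * (x - α) := by
          simp [L, (Fin.castSucc_lt_succ : r.castSucc < r.succ).ne.symm]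
        rw [this]
        exact mul_ne_zero (hchoose_ne _ (Nat.sub_le _ _))
          (by rw [hx]; exact sub_ne_zero.2 (Ne.symm hαβ))
      · intro i j hij
        have hv : (i : ℕ) < (j : ℕ) := hij
        have h1 : j.succ ≠ i.castSucc := by
          intro h; rw [Fin.ext_iff] at h; simp at h; omega
        have h2 : j.succ ≠ i.succ := by
          intro h; rw [Fin.ext_iff] at h; simp at h; omega
        simp [L, h1, h2]
    · apply rank_eq_of_submatrix _ (Fin.castSucc)
      rw [Matrix.det_of_upperTriangular]
      · refine isUnit_iff_ne_zero.mpr (Finset.prod_ne_zero_iff.mpr fun r _ => ?_)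
        have : ((L.map (Polynomial.eval x)).submatrix id Fin.castSucc) r r =
            (k.choose (k - 1 - (r : ℕ)) : F) * (x - β) := by
          simp [L]
        rw [this]
        exact mul_ne_zero (hchoose_ne _ (by omega)) (sub_ne_zero.2 hx)
      · intro i j hij
        have hv : (j : ℕ) < (i : ℕ) := hij
        have h1 : j.castSucc ≠ i.castSucc := by
          intro h; rw [Fin.ext_iff] at h; simp at h; omega
        have h2 : j.castSucc ≠ i.succ := by
          intro h; rw [Fin.ext_iff] at h; simp at h; omega
        simp [L, h1, h2]
  · -- rank of coefficient matrix
    apply rank_eq_of_submatrix _ (Fin.castSucc)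
    rw [Matrix.det_of_upperTriangular]
    · refine isUnit_iff_ne_zero.mpr (Finset.prod_ne_zero_iff.mpr fun r _ => ?_)
      have : ((Matrix.of fun (r : Fin k) (c : Fin (k + 1)) => (L r c).coeff 1).submatrix
          id Fin.castSucc) r r = (k.choose (k - 1 - (r : ℕ)) : F) := by
        simp [L, coeff_one_aux]
      rw [this]
      exact hchoose_ne _ (by omega)
    · intro i j hij
      have hv : (j : ℕ) < (i : ℕ) := hij
      have h1 : j.castSucc ≠ i.castSucc := by
        intro h; rw [Fin.ext_iff] at h; simp at h; omega
      have h2 : j.castSucc ≠ i.succ := by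
        intro h; rw [Fin.ext_iff] at h; simp at h; omega
      simp [L, h1, h2]

end PaperLin
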